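/- Let f_i : ℝ^m → ℝ be finitely many continuously differentiable functions and f = min_{i∈I} f_i. Fix v with active set A_f(v), and suppose there exists a direction d ∈ ℝ^m and index i ∈ A_f(v) with ⟨∇f_i(v), d⟩ < ⟨∇f_j(v), d⟩ for all j ∈ A_f(v) \ {i}. Then for all sufficiently small τ > 0, the active set of f at v + τd is exactly {i}, i.e., f(v+τd) = f_i(v+τd) < f_j(v+τd) for all j ∈ I \ {i}. -/

import Mathlib

open Filter Topology Set

theorem stmt17 {m : ℕ} {ι : Type*} [Fintype ι] [Nonempty ι]
    (fI : ι → EuclideanSpace ℝ (Fin m) → ℝ)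
    (hC1 : ∀ i, ContDiff ℝ 1 (fI i))
    (f : EuclideanSpace ℝ (Fin m) → ℝ)
    (hf : ∀ w, f w = ⨅ j, fI j w)
    (v d : EuclideanSpace ℝ (Fin m)) (i : ι)
    (hi : fI i v = f v)
    (hdir : ∀ j, fI j v = f v → j ≠ i →
      (inner ℝ (gradient (fI i) v) d : ℝ) < (inner ℝ (gradient (fI j) v) d : ℝ)) :
    ∃ τ₀ > (0 : ℝ), ∀ τ : ℝ, 0 < τ → τ < τ₀ →
      f (v + τ • d) = fI i (v + τ • d) ∧
      ∀ j, j ≠ i → fI i (v + τ • d) < fI j (v + τ • d) := by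
  have hbdd : ∀ w, BddBelow (Set.range fun j => fI j w) :=
    fun w => (Set.finite_range _).bddBelow
  have hfle : ∀ w j, f w ≤ fI j w := fun w j => (hf w) ▸ ciInf_le (hbdd w) j
  have hd : ∀ k : ι, HasDerivAt (fun τ : ℝ => fI k (v + τ • d))
      ((inner ℝ (gradient (fI k) v) d : ℝ)) 0 := by
    intro k
    have hline : HasDerivAt (fun τ : ℝ => v + τ • d) d 0 := by
      simpa using ((hasDerivAt_id (0 : ℝ)).smul_const d).const_add v
    have hdk : DifferentiableAt ℝ (fI k) v :=
      ((hC1 k).differentiable one_ne_zero).differentiableAt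
    have hF : HasFDerivAt (fI k)
        ((InnerProductSpace.toDual ℝ _) (gradient (fI k) v)) v := hdk.hasGradientAt
    have h0 : v + (0 : ℝ) • d = v := by simp
    rw [← h0] at hF
    have := hF.comp_hasDerivAt 0 hline
    simp only [InnerProductSpace.toDual_apply_apply, h0] at this
    exact this
  have key : ∀ j : ι, j ≠ i → ∀ᶠ τ in 𝓝[>] (0 : ℝ),
      fI i (v + τ • d) < fI j (v + τ • d) := by
    intro j hj
    by_cases hact : fI j v = f v
    · -- active case: use derivative comparison
      have hc : (0 : ℝ) < (inner ℝ (gradient (fI j) v) d : ℝ)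
          - (inner ℝ (gradient (fI i) v) d : ℝ) :=
        sub_pos.mpr (hdir j hact hj)
      have hgd : HasDerivAt (fun τ : ℝ => fI j (v + τ • d) - fI i (v + τ • d))
          ((inner ℝ (gradient (fI j) v) d : ℝ) - (inner ℝ (gradient (fI i) v) d : ℝ)) 0 :=
        (hd j).sub (hd i)
      have hslope := hasDerivAt_iff_tendsto_slope.mp hgd
      have hev : ∀ᶠ τ in 𝓝[≠] (0 : ℝ),
          0 < slope (fun τ : ℝ => fI j (v + τ • d) - fI i (v + τ • d)) 0 τ :=
        hslope.eventually (eventually_gt_nhds hc)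
      have hmono : 𝓝[>] (0 : ℝ) ≤ 𝓝[≠] (0 : ℝ) :=
        nhdsWithin_mono 0 (fun x hx => ne_of_gt hx)
      filter_upwards [hmono hev, self_mem_nhdsWithin] with τ hτ hτpos
      have h0 : fI j (v + (0 : ℝ) • d) - fI i (v + (0 : ℝ) • d) = 0 := by
        simp [hact, hi]
      rw [slope_def_field] at hτ
      have := mul_pos hτ (sub_pos.mpr (hτpos : (0 : ℝ) < τ))
      rw [div_mul_cancel₀] at this
      · simp only [h0, sub_zero] at this
        linarith
      · simpa using (ne_of_gt (hτpos : (0 : ℝ) < τ))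
    · -- inactive case: continuity
      have hgt : fI i v < fI j v := by
        have hle : fI i v ≤ fI j v := hi ▸ hfle v j
        refine lt_of_le_of_ne hle fun h => hact ?_
        rw [← h, hi]
      have hcont : ContinuousAt (fun τ : ℝ => fI j (v + τ • d) - fI i (v + τ • d)) 0 := by
        have hc : ∀ k : ι, Continuous (fun τ : ℝ => fI k (v + τ • d)) := by
          intro k
          exact ((hC1 k).continuous).comp (by continuity)
        exact ((hc j).sub (hc i)).continuousAt
      have h0 : 0 < fI j (v + (0 : ℝ) • d) - fI i (v + (0 : ℝ) • d) := by
        simpa using sub_pos.mpr hgt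
      have hev := continuousAt_const.eventually_lt hcont (by simpa using h0 :
        (fun _ : ℝ => (0 : ℝ)) 0 < fI j (v + (0 : ℝ) • d) - fI i (v + (0 : ℝ) • d))
      exact nhdsWithin_le_nhds (hev.mono fun τ h => by
        simp only at h; linarith)
  have hall : ∀ᶠ τ in 𝓝[>] (0 : ℝ), ∀ j, j ≠ i →
      fI i (v + τ • d) < fI j (v + τ • d) := by
    rw [eventually_all]
    intro j
    by_cases hj : j = i
    · subst hj; exact Eventually.of_forall (fun τ h => absurd rfl h)
    · exact (key j hj).mono (fun τ h _ => h)
  obtain ⟨τ₀, hτ₀, hτ₀'⟩ := (nhdsGT_basis (0 : ℝ)).eventually_iff.mp hall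
  refine ⟨τ₀, hτ₀, fun τ h1 h2 => ?_⟩
  have hlt := hτ₀' ⟨h1, h2⟩
  refine ⟨le_antisymm (hfle _ i) ?_, hlt⟩
  rw [hf]
  refine le_ciInf fun j => ?_
  by_cases hj : j = i
  · subst hj; exact le_rfl
  · exact (hlt j hj).le
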